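/- For each a ∈ (0,1), the function μ_a(r) = (π / (2 sin(πa))) · F(a, 1-a; 1; 1-r²) / F(a, 1-a; 1; r²) is a strictly decreasing homeomorphism from (0,1) onto (0,∞). -/

import Mathlib

/-- The shifted factorial (Appell symbol) `(a)ₙ = a (a+1) ⋯ (a+n-1)`. -/
noncomputable def poch (a : ℝ) (n : ℕ) : ℝ := ∏ i ∈ Finset.range n, (a + i)

/-- The Gaussian hypergeometric function `F(a,b;c;x)` as a power series. -/
noncomputable def hypF (a b c x : ℝ) : ℝ :=
  ∑' n : ℕ, poch a n * poch b n / (poch c n * (n.factorial : ℝ)) * x ^ n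

/-- The function `μₐ`. -/
noncomputable def muA (a r : ℝ) : ℝ :=
  (Real.pi / (2 * Real.sin (Real.pi * a))) * hypF a (1-a) 1 (1 - r^2) / hypF a (1-a) 1 (r^2)

/- ### Auxiliary development -/

/-- The coefficients of `F(a, 1-a; 1; ·)`. -/
noncomputable def coefA (a : ℝ) (n : ℕ) : ℝ :=
  poch a n * poch (1-a) n / (poch 1 n * (n.factorial : ℝ))

/-- The function `x ↦ F(a, 1-a; 1; x)`. -/
noncomputable def fA (a x : ℝ) : ℝ := ∑' n : ℕ, coefA a n * x ^ n

lemma hypF_eq (a x : ℝ) : hypF a (1-a) 1 x = fA a x := rfl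

lemma poch_zero (a : ℝ) : poch a 0 = 1 := by simp [poch]

lemma poch_succ (a : ℝ) (n : ℕ) : poch a (n+1) = poch a n * (a + n) :=
  Finset.prod_range_succ _ n

lemma poch_pos {a : ℝ} (ha : 0 < a) (n : ℕ) : 0 < poch a n :=
  Finset.prod_pos fun i _ => by positivity

lemma coefA_zero (a : ℝ) : coefA a 0 = 1 := by simp [coefA, poch_zero]

lemma coefA_succ (a : ℝ) (n : ℕ) :
    coefA a (n+1) = coefA a n * ((a + n) * (1 - a + n) / ((1 + n) * (n + 1))) := by
  have h1 : poch 1 n ≠ 0 := (poch_pos one_pos n).ne'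
  have h2 : ((n.factorial : ℝ)) ≠ 0 := by
    exact_mod_cast n.factorial_ne_zero
  have h3 : ((1:ℝ) + n) ≠ 0 := by positivity
  have h4 : ((n:ℝ) + 1) ≠ 0 := by positivity
  simp only [coefA, poch_succ, Nat.factorial_succ, Nat.cast_mul, Nat.cast_add, Nat.cast_one]
  field_simp

lemma coefA_pos {a : ℝ} (ha : 0 < a) (ha1 : a < 1) (n : ℕ) : 0 < coefA a n := by
  have h1 : (0:ℝ) < 1 - a := by linarith
  have hf : (0:ℝ) < n.factorial := by exact_mod_cast n.factorial_pos
  exact div_pos (mul_pos (poch_pos ha n) (poch_pos h1 n))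
    (mul_pos (poch_pos one_pos n) hf)

lemma coefA_le_one {a : ℝ} (ha : 0 < a) (ha1 : a < 1) (n : ℕ) : coefA a n ≤ 1 := by
  induction n with
  | zero => simp [coefA_zero]
  | succ n ih =>
    rw [coefA_succ]
    have hn : (0:ℝ) ≤ n := Nat.cast_nonneg n
    have hq1 : (a + n) * (1 - a + n) / ((1 + n) * (n + 1)) ≤ 1 := by
      rw [div_le_one (by positivity)]
      nlinarith
    have hq0 : 0 ≤ (a + n) * (1 - a + n) / ((1 + n) * (n + 1)) := by
      apply div_nonneg (by nlinarith) (by positivity)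
    nlinarith [coefA_pos ha ha1 n]

lemma coefA_one {a : ℝ} : coefA a 1 = a * (1 - a) := by
  rw [show (1:ℕ) = 0 + 1 from rfl, coefA_succ, coefA_zero]
  norm_num

lemma coefA_ge {a : ℝ} (ha : 0 < a) (ha1 : a < 1) :
    ∀ n : ℕ, 1 ≤ n → a * (1 - a) / n ≤ coefA a n := by
  intro n hn
  induction n, hn using Nat.le_induction with
  | base => rw [coefA_one]; norm_num
  | succ n hn ih =>
    rw [coefA_succ]
    have hn' : (1:ℝ) ≤ n := by exact_mod_cast hn
    have h1 : 0 < coefA a n := coefA_pos ha ha1 n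
    have h1a : (0:ℝ) < a * (1 - a) := mul_pos ha (by linarith)
    have hq : (n:ℝ)/(n+1) ≤ (a + n) * (1 - a + n) / ((1 + n) * (n + 1)) := by
      rw [div_le_div_iff₀ (by positivity) (by positivity)]
      nlinarith
    have key : (a * (1 - a) / n) * ((n:ℝ)/(n+1))
        ≤ coefA a n * ((a + n) * (1 - a + n) / ((1 + n) * (n + 1))) := by
      apply mul_le_mul ih hq (by positivity) h1.le
    have heq : (a * (1 - a) / n) * ((n:ℝ)/(n+1)) = a * (1 - a) / ((n:ℝ)+1) := by
      field_simp
    push_cast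
    rw [← heq]
    exact key

lemma summable_fA {a x : ℝ} (ha : 0 < a) (ha1 : a < 1) (hx : 0 ≤ x) (hx1 : x < 1) :
    Summable (fun n : ℕ => coefA a n * x ^ n) := by
  apply Summable.of_nonneg_of_le
    (fun n => mul_nonneg (coefA_pos ha ha1 n).le (pow_nonneg hx n))
    (fun n => mul_le_of_le_one_left (pow_nonneg hx n) (coefA_le_one ha ha1 n))
    (summable_geometric_of_lt_one hx hx1)

lemma fA_ge_one {a x : ℝ} (ha : 0 < a) (ha1 : a < 1) (hx : 0 ≤ x) (hx1 : x < 1) :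
    1 ≤ fA a x := by
  have h := Summable.le_tsum (summable_fA ha ha1 hx hx1) 0
    (fun j _ => mul_nonneg (coefA_pos ha ha1 j).le (pow_nonneg hx j))
  simpa [coefA_zero, fA] using h

lemma fA_pos {a x : ℝ} (ha : 0 < a) (ha1 : a < 1) (hx : 0 ≤ x) (hx1 : x < 1) :
    0 < fA a x := lt_of_lt_of_le one_pos (fA_ge_one ha ha1 hx hx1)

lemma fA_mono {a x y : ℝ} (ha : 0 < a) (ha1 : a < 1) (hx : 0 ≤ x) (hxy : x ≤ y)
    (hy1 : y < 1) : fA a x ≤ fA a y := by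
  apply Summable.tsum_le_tsum
  · intro n
    exact mul_le_mul_of_nonneg_left (pow_le_pow_left₀ hx hxy n) (coefA_pos ha ha1 n).le
  · exact summable_fA ha ha1 hx (lt_of_le_of_lt hxy hy1)
  · exact summable_fA ha ha1 (le_trans hx hxy) hy1

lemma fA_strict_mono {a x y : ℝ} (ha : 0 < a) (ha1 : a < 1) (hx : 0 ≤ x) (hxy : x < y)
    (hy1 : y < 1) : fA a x < fA a y := by
  apply Summable.tsum_lt_tsum (i := 1)
  · intro n
    exact mul_le_mul_of_nonneg_left (pow_le_pow_left₀ hx hxy.le n) (coefA_pos ha ha1 n).le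
  · simp only [pow_one]
    exact mul_lt_mul_of_pos_left hxy (coefA_pos ha ha1 1)
  · exact summable_fA ha ha1 hx (lt_trans hxy hy1)
  · exact summable_fA ha ha1 (le_trans hx hxy.le) hy1

lemma fA_le {a x : ℝ} (ha : 0 < a) (ha1 : a < 1) (hx : 0 ≤ x) (hx1 : x < 1) :
    fA a x ≤ (1 - x)⁻¹ := by
  rw [← tsum_geometric_of_lt_one hx hx1]
  apply Summable.tsum_le_tsum
  · exact fun n => mul_le_of_le_one_left (pow_nonneg hx n) (coefA_le_one ha ha1 n)
  · exact summable_fA ha ha1 hx hx1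
  · exact summable_geometric_of_lt_one hx hx1

lemma fA_continuousAt {a x : ℝ} (ha : 0 < a) (ha1 : a < 1) (hx : 0 ≤ x) (hx1 : x < 1) :
    ContinuousAt (fA a) x := by
  set b := (x + 1) / 2 with hb
  have hxb : x < b := by rw [hb]; linarith
  have hb0 : 0 < b := by rw [hb]; linarith
  have hb1 : b < 1 := by rw [hb]; linarith
  have hc : ContinuousOn (fA a) (Set.Icc (-b) b) := by
    show ContinuousOn (fun y : ℝ => ∑' n : ℕ, coefA a n * y ^ n) (Set.Icc (-b) b)
    apply continuousOn_tsum (u := fun n => b ^ n)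
    · intro i; exact (continuous_const.mul (continuous_pow i)).continuousOn
    · exact summable_geometric_of_lt_one hb0.le hb1
    · intro n y hy
      have h1 : |y| ≤ b := abs_le.2 ⟨hy.1, hy.2⟩
      rw [Real.norm_eq_abs, abs_mul, abs_pow, abs_of_pos (coefA_pos ha ha1 n)]
      calc coefA a n * |y| ^ n ≤ 1 * |y| ^ n :=
            mul_le_mul_of_nonneg_right (coefA_le_one ha ha1 n) (by positivity)
        _ = |y| ^ n := one_mul _
        _ ≤ b ^ n := pow_le_pow_left₀ (abs_nonneg y) h1 n
  exact hc.continuousAt (Icc_mem_nhds (by linarith) hxb)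

lemma fA_unbounded {a : ℝ} (ha : 0 < a) (ha1 : a < 1) (M : ℝ) :
    ∃ x : ℝ, 0 ≤ x ∧ x < 1 ∧ M < fA a x := by
  have h1a : (0:ℝ) < a * (1 - a) := mul_pos ha (by linarith)
  obtain ⟨N, hN⟩ :=
    (Real.tendsto_sum_range_one_div_nat_succ_atTop.eventually_gt_atTop
      (M / (a * (1 - a)))).exists
  set g : ℝ → ℝ := fun x => ∑ n ∈ Finset.range (N+1), coefA a n * x ^ n with hg
  have hS : M < g 1 := by
    have hM : M < (∑ i ∈ Finset.range N, 1/((i:ℝ)+1)) * (a * (1 - a)) := by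
      rw [← div_lt_iff₀ h1a]
      exact hN
    have key : (∑ i ∈ Finset.range N, 1/((i:ℝ)+1)) * (a * (1 - a)) ≤ g 1 := by
      rw [hg]
      simp only [one_pow, mul_one]
      rw [Finset.sum_range_succ']
      rw [Finset.sum_mul]
      have hterm : ∀ i ∈ Finset.range N,
          1/((i:ℝ)+1) * (a * (1 - a)) ≤ coefA a (i+1) := by
        intro i _
        have h := coefA_ge ha ha1 (i+1) (Nat.le_add_left 1 i)
        push_cast at h
        rw [one_div, inv_mul_eq_div]
        exact h
      have hsum := Finset.sum_le_sum hterm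
      have h0 : coefA a 0 = 1 := coefA_zero a
      linarith
    linarith
  have hgcont : ContinuousAt g 1 := by
    apply Continuous.continuousAt
    exact continuous_finset_sum _ fun n _ => continuous_const.mul (continuous_pow n)
  have h1 : Filter.Tendsto g (nhdsWithin 1 (Set.Iio 1)) (nhds (g 1)) :=
    hgcont.tendsto.mono_left nhdsWithin_le_nhds
  have h2 : ∀ᶠ x in nhdsWithin (1:ℝ) (Set.Iio 1), M < g x :=
    h1.eventually (eventually_gt_nhds hS)
  have h3 : ∀ᶠ x : ℝ in nhdsWithin (1:ℝ) (Set.Iio 1), x ∈ Set.Ioo (0:ℝ) 1 :=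
    Filter.eventually_of_mem (Ioo_mem_nhdsLT one_pos) fun x hx => hx
  obtain ⟨x, hgx, hx01⟩ := (h2.and h3).exists
  refine ⟨x, hx01.1.le, hx01.2, lt_of_lt_of_le hgx ?_⟩
  exact Summable.sum_le_tsum _ (fun n _ => mul_nonneg (coefA_pos ha ha1 n).le
    (pow_nonneg hx01.1.le n)) (summable_fA ha ha1 hx01.1.le hx01.2)

/-- For each `a ∈ (0,1)`, `μₐ` is a strictly decreasing homeomorphism of `(0,1)` onto `(0,∞)`. -/
theorem muA_strict_anti_homeomorphism (a : ℝ) (ha : a ∈ Set.Ioo (0:ℝ) 1) :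
    StrictAntiOn (muA a) (Set.Ioo (0:ℝ) 1) ∧
    ContinuousOn (muA a) (Set.Ioo (0:ℝ) 1) ∧
    Set.MapsTo (muA a) (Set.Ioo (0:ℝ) 1) (Set.Ioi (0:ℝ)) ∧
    Set.SurjOn (muA a) (Set.Ioo (0:ℝ) 1) (Set.Ioi (0:ℝ)) := by
  obtain ⟨ha0, ha1⟩ := ha
  have hC : 0 < Real.pi / (2 * Real.sin (Real.pi * a)) := by
    apply div_pos Real.pi_pos
    have h : 0 < Real.sin (Real.pi * a) :=
      Real.sin_pos_of_pos_of_lt_pi (by positivity)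
        (by nlinarith [Real.pi_pos])
    linarith
  set C := Real.pi / (2 * Real.sin (Real.pi * a)) with hCdef
  have hmu : ∀ r : ℝ, muA a r = C * fA a (1 - r^2) / fA a (r^2) := fun r => rfl
  -- basic square facts
  have hsq : ∀ r ∈ Set.Ioo (0:ℝ) 1, 0 < r^2 ∧ r^2 < 1 ∧ 0 < 1 - r^2 ∧ 1 - r^2 < 1 := by
    intro r hr
    obtain ⟨hr0, hr1⟩ := hr
    constructor; · positivity
    constructor; · nlinarith
    constructor; · nlinarith
    · nlinarith
  -- positivity of muA on (0,1)
  have hpos : ∀ r ∈ Set.Ioo (0:ℝ) 1, 0 < muA a r := by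
    intro r hr
    obtain ⟨h1, h2, h3, h4⟩ := hsq r hr
    rw [hmu]
    exact div_pos (mul_pos hC (fA_pos ha0 ha1 h3.le h4)) (fA_pos ha0 ha1 h1.le h2)
  -- strict antitonicity
  have hanti : StrictAntiOn (muA a) (Set.Ioo (0:ℝ) 1) := by
    intro r1 hr1 r2 hr2 h12
    obtain ⟨h11, h12', h13, h14⟩ := hsq r1 hr1
    obtain ⟨h21, h22, h23, h24⟩ := hsq r2 hr2
    have hsq12 : r1^2 < r2^2 := by nlinarith [hr1.1, hr2.1]
    rw [hmu r1, hmu r2]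
    apply div_lt_div₀
    · exact mul_lt_mul_of_pos_left
        (fA_strict_mono ha0 ha1 h23.le (by nlinarith) h14) hC
    · exact (fA_strict_mono ha0 ha1 h11.le hsq12 h22).le
    · exact (mul_pos hC (fA_pos ha0 ha1 h13.le h14)).le
    · exact fA_pos ha0 ha1 h11.le h12'
  -- continuity
  have hcont : ContinuousOn (muA a) (Set.Ioo (0:ℝ) 1) := by
    intro r hr
    apply ContinuousAt.continuousWithinAt
    obtain ⟨h1, h2, h3, h4⟩ := hsq r hr
    have c1 : ContinuousAt (fun r : ℝ => fA a (1 - r^2)) r := by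
      have hf : ContinuousAt (fun r : ℝ => 1 - r^2) r :=
        (continuous_const.sub (continuous_pow 2)).continuousAt
      exact ContinuousAt.comp (x := r) (g := fA a)
        (fA_continuousAt ha0 ha1 h3.le h4) hf
    have c2 : ContinuousAt (fun r : ℝ => fA a (r^2)) r := by
      have hf : ContinuousAt (fun r : ℝ => r^2) r := (continuous_pow 2).continuousAt
      exact ContinuousAt.comp (x := r) (g := fA a)
        (fA_continuousAt ha0 ha1 h1.le h2) hf
    have hne : fA a (r^2) ≠ 0 := (fA_pos ha0 ha1 h1.le h2).ne'
    have : ContinuousAt (fun r : ℝ => C * fA a (1 - r^2) / fA a (r^2)) r :=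
      (continuousAt_const.mul c1).div c2 hne
    have heq : muA a = fun r : ℝ => C * fA a (1 - r^2) / fA a (r^2) := funext hmu
    rw [heq]
    exact this
  refine ⟨hanti, hcont, fun r hr => hpos r hr, ?_⟩
  -- surjectivity
  intro y hy
  rw [Set.mem_Ioi] at hy
  have hf2 : 0 < fA a (1/2) := fA_pos ha0 ha1 (by norm_num) (by norm_num)
  -- a point with large muA
  obtain ⟨x₀, hx₀0, hx₀1, hx₀⟩ := fA_unbounded ha0 ha1 (y * fA a (1/2) / C)
  set r₁ : ℝ := min (Real.sqrt (1 - x₀)) (1/2) with hr₁def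
  have hr₁0 : 0 < r₁ := lt_min (Real.sqrt_pos.2 (by linarith)) (by norm_num)
  have hr₁1 : r₁ < 1 := lt_of_le_of_lt (min_le_right _ _) (by norm_num)
  have hr₁mem : r₁ ∈ Set.Ioo (0:ℝ) 1 := ⟨hr₁0, hr₁1⟩
  obtain ⟨hq1, hq2, hq3, hq4⟩ := hsq r₁ hr₁mem
  have hr₁sq : r₁^2 ≤ 1 - x₀ := by
    have h := min_le_left (Real.sqrt (1 - x₀)) (1/2)
    calc r₁^2 ≤ (Real.sqrt (1 - x₀))^2 := pow_le_pow_left₀ hr₁0.le h 2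
      _ = 1 - x₀ := Real.sq_sqrt (by linarith)
  have hr₁half : r₁^2 ≤ 1/2 := by
    have h := min_le_right (Real.sqrt (1 - x₀)) (1/2)
    nlinarith
  have hbig : y < muA a r₁ := by
    rw [hmu]
    have hnum : fA a x₀ ≤ fA a (1 - r₁^2) := fA_mono ha0 ha1 hx₀0 (by linarith) hq4
    have hden : fA a (r₁^2) ≤ fA a (1/2) := fA_mono ha0 ha1 hq1.le hr₁half (by norm_num)
    have step1 : y < C * fA a x₀ / fA a (1/2) := by
      rw [lt_div_iff₀ hf2]
      have := (div_lt_iff₀ hC).1 hx₀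
      nlinarith
    have step2 : C * fA a x₀ / fA a (1/2) ≤ C * fA a (1 - r₁^2) / fA a (r₁^2) := by
      apply div_le_div₀
      · exact (mul_pos hC (fA_pos ha0 ha1 hq3.le hq4)).le
      · exact mul_le_mul_of_nonneg_left hnum hC.le
      · exact fA_pos ha0 ha1 hq1.le hq2
      · exact hden
    linarith
  -- a point with small muA
  obtain ⟨x₁, hx₁0, hx₁1, hx₁⟩ := fA_unbounded ha0 ha1 (2 * C / y)
  set r₂ : ℝ := Real.sqrt (max x₁ (1/2)) with hr₂def
  have hmax0 : (0:ℝ) < max x₁ (1/2) := lt_max_of_lt_right (by norm_num)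
  have hmax1 : max x₁ (1/2) < 1 := max_lt hx₁1 (by norm_num)
  have hr₂sq : r₂^2 = max x₁ (1/2) := Real.sq_sqrt hmax0.le
  have hr₂0 : 0 < r₂ := Real.sqrt_pos.2 hmax0
  have hr₂1 : r₂ < 1 := by nlinarith [hr₂sq, hr₂0]
  have hr₂mem : r₂ ∈ Set.Ioo (0:ℝ) 1 := ⟨hr₂0, hr₂1⟩
  obtain ⟨hp1, hp2, hp3, hp4⟩ := hsq r₂ hr₂mem
  have hsmall : muA a r₂ < y := by
    rw [hmu]
    have hden : fA a x₁ ≤ fA a (r₂^2) := by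
      apply fA_mono ha0 ha1 hx₁0 _ hp2
      rw [hr₂sq]; exact le_max_left _ _
    have hden' : 2 * C / y < fA a (r₂^2) := lt_of_lt_of_le hx₁ hden
    have hnum : fA a (1 - r₂^2) ≤ 2 := by
      have h1 : 1 - r₂^2 ≤ 1/2 := by
        have := le_max_right x₁ (1/2); rw [hr₂sq]; linarith
      calc fA a (1 - r₂^2) ≤ fA a (1/2) := fA_mono ha0 ha1 hp3.le h1 (by norm_num)
        _ ≤ (1 - 1/2 : ℝ)⁻¹ := fA_le ha0 ha1 (by norm_num) (by norm_num)
        _ = 2 := by norm_num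
    rw [div_lt_iff₀ (fA_pos ha0 ha1 hp1.le hp2)]
    have h2C : 2 * C < y * fA a (r₂^2) := by
      rw [div_lt_iff₀ hy] at hden'
      linarith [hden']
    nlinarith [mul_le_mul_of_nonneg_left hnum hC.le]
  -- r₁ < r₂
  have hr₁₂ : r₁ < r₂ := by
    rcases lt_trichotomy r₁ r₂ with h | h | h
    · exact h
    · rw [h] at hbig; linarith
    · have := hanti hr₂mem hr₁mem h; linarith
  -- intermediate value
  have hsub : Set.Icc r₁ r₂ ⊆ Set.Ioo (0:ℝ) 1 :=
    fun z hz => ⟨lt_of_lt_of_le hr₁0 hz.1, lt_of_le_of_lt hz.2 hr₂1⟩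
  have hivt := intermediate_value_Icc' hr₁₂.le (hcont.mono hsub)
  have hymem : y ∈ Set.Icc (muA a r₂) (muA a r₁) := ⟨hsmall.le, hbig.le⟩
  obtain ⟨r, hrmem, hry⟩ := hivt hymem
  exact ⟨r, hsub hrmem, hry⟩
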